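/- (Stationarity of the RWT-VSA chain.) Under the hypotheses of the weight assignment w_u = α b_u with α > 0, B := ∑_{u∈U} b_u > 0, d_v^{(b)} ≥ 1 for all v ∈ V, and d_u + w_u > 0 for all u ∈ U, the probability vector π on U ∪ {j} given by π_u = (d_u + w_u)/Z for u ∈ U and π_j = αB/Z, where Z = 2|E| + 2αB, is stationary for the RWT-VSA transition kernel P: for every state y ∈ U ∪ {j}, ∑_{x ∈ U∪{j}} π_x P(x,y) = π_y. -/

import Mathlib

open Finset

/-- Stationarity of the RWT-VSA chain: with weights
`w u = α * b u`, the probability vector `π` on `U ∪ {j}` (encoded as `Option U`,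
with the jumper node `j` encoded by `none`) given by `π u = (d u + w u)/Z`,
`π j = α B / Z`, `Z = 2|E| + 2 α B`, is stationary for the RWT-VSA transition
kernel `P`: for every state `y`, `∑ x, π x * P x y = π y`. -/
theorem rwtvsa_stationary
    {U V : Type*} [Fintype U] [Fintype V] [DecidableEq U]
    (G : SimpleGraph U) [DecidableRel G.Adj]
    (R : U → V → Prop) [∀ u v, Decidable (R u v)]
    (a : V → ℝ) (ha : ∀ v, 0 < a v)
    (dVb : V → ℕ) (hdVb : ∀ v, dVb v = (Finset.univ.filter (fun u => R u v)).card)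
    (hdeg : ∀ v, 1 ≤ dVb v)
    (b : U → ℝ)
    (hb : ∀ u, b u = ∑ v ∈ Finset.univ.filter (fun v => R u v), a v / (dVb v : ℝ))
    (α : ℝ) (hα : 0 < α)
    (w : U → ℝ) (hw : ∀ u, w u = α * b u)
    (B : ℝ) (hB : B = ∑ u : U, b u) (hBpos : 0 < B)
    (hdw : ∀ u, 0 < (G.degree u : ℝ) + w u)
    (P : Option U → Option U → ℝ)
    (hP1 : ∀ u u' : U, P (some u) (some u') =
      if G.Adj u u' then 1 / ((G.degree u : ℝ) + w u) else 0)
    (hP2 : ∀ u : U, P (some u) none = w u / ((G.degree u : ℝ) + w u))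
    (hP3 : ∀ u : U, P none (some u) = b u / B)
    (hP4 : P none none = 0)
    (Z : ℝ) (hZ : Z = 2 * (G.edgeFinset.card : ℝ) + 2 * α * B)
    (pi : Option U → ℝ)
    (hpi1 : ∀ u : U, pi (some u) = ((G.degree u : ℝ) + w u) / Z)
    (hpi2 : pi none = α * B / Z) :
    ∀ y : Option U, ∑ x : Option U, pi x * P x y = pi y := by
  have hZpos : 0 < Z := by
    rw [hZ]
    positivity
  have hZne : Z ≠ 0 := ne_of_gt hZpos
  have hBne : B ≠ 0 := ne_of_gt hBpos
  intro y
  rw [Fintype.sum_option]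
  cases y with
  | none =>
      rw [hP4, mul_zero, zero_add, hpi2]
      have : ∀ u : U, pi (some u) * P (some u) none = w u / Z := by
        intro u
        rw [hpi1, hP2]
        have hne : (G.degree u : ℝ) + w u ≠ 0 := (hdw u).ne'
        field_simp
      rw [Finset.sum_congr rfl (fun u _ => this u)]
      rw [← Finset.sum_div]
      congr 1
      simp only [hw, ← Finset.mul_sum, ← hB]
  | some u' =>
      have hsum : ∀ u : U, pi (some u) * P (some u) (some u') =
          if G.Adj u u' then 1 / Z else 0 := by
        intro u
        rw [hpi1, hP1]
        split_ifs with h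
        · have hne : (G.degree u : ℝ) + w u ≠ 0 := (hdw u).ne'
          field_simp
        · ring
      rw [Finset.sum_congr rfl (fun u _ => hsum u)]
      rw [← Finset.sum_filter, Finset.sum_const]
      have hcard : (Finset.univ.filter (fun u => G.Adj u u')).card = G.degree u' := by
        rw [← SimpleGraph.card_neighborFinset_eq_degree]
        congr 1
        ext u
        simp [SimpleGraph.adj_comm]
      rw [hcard, hP3, hpi2, hpi1]
      rw [hw]
      field_simp
      ring_nf
      simp [hZne]
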